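/- Let f : ℝ/ℤ → ℝⁿ be a closed curve satisfying the bi-Lipschitz condition with constants L₁, L₂, and let 0 ≤ θ₁ < … < θ_m < 1 satisfy the equilateral condition. Then for all sufficiently large m and all integers i, j with 1 ≤ |i − j| ≤ ⌊m/2⌋ (indices of vertices taken mod m), writing k = |i − j|: Aᵢ‖Δᵢʲf‖ ≥ (L_mL₁/L₂)·(k − ½)/m, Aᵢ‖Δᵢ^{j+1}f‖ ≥ (L_mL₁/L₂)·(k − ½)/m, A_{ij}‖Δᵢʲf‖ ≥ (L_mL₁/L₂)·(k − ¼)/m, and A_{ij}‖Δᵢ^{j+1}f‖ ≥ (L_mL₁/(2L₂))·k/m. -/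

import Mathlib

open MeasureTheory Real
open scoped RealInnerProductSpace ENNReal

noncomputable section

/-- The standard distance on `ℝ/ℤ`, expressed through real representatives. -/
def circleDist (a b : ℝ) : ℝ := min (Int.fract (a - b)) (1 - Int.fract (a - b))

/-- The `H^{1/2}`-seminorm `[u]_{H^{1/2}(I×J)}`. -/
def seminormH {n : ℕ} (u : ℝ → EuclideanSpace ℝ (Fin n)) (I J : Set ℝ) : ℝ :=
  Real.sqrt (∫ a in I, ∫ b in J, ‖u a - u b‖ ^ 2 / circleDist a b ^ 2)

/-- `K(u, ε)`: supremum of the `H^{1/2}`-seminorms of `u` over pairs of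
measurable subsets of `ℝ/ℤ` of measure at most `ε`. -/
def Kmod {n : ℕ} (u : ℝ → EuclideanSpace ℝ (Fin n)) (ε : ℝ) : ℝ :=
  sSup { r : ℝ | ∃ I J : Set ℝ, MeasurableSet I ∧ MeasurableSet J ∧
    I ⊆ Set.Ico (0 : ℝ) 1 ∧ J ⊆ Set.Ico (0 : ℝ) 1 ∧
    volume I ≤ ENNReal.ofReal ε ∧ volume J ≤ ENNReal.ofReal ε ∧
    r = seminormH u I J }

/-- Difference operator `Δᵢ` in the first index. -/
def dOpI (u : ℤ → ℤ → ℝ) (i j : ℤ) : ℝ := u (i + 1) j - u i j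

/-- Difference operator `Δⱼ` in the second index. -/
def dOpJ (u : ℤ → ℤ → ℝ) (i j : ℤ) : ℝ := u i (j + 1) - u i j

/-- Arithmetic mean `Aᵢ` in the first index. -/
def aOpI (u : ℤ → ℤ → ℝ) (i j : ℤ) : ℝ := (u i j + u (i + 1) j) / 2

/-- Arithmetic mean `Aⱼ` in the second index. -/
def aOpJ (u : ℤ → ℤ → ℝ) (i j : ℤ) : ℝ := (u i j + u i (j + 1)) / 2

/-- Arithmetic mean `A_{ij}` over the four corners. -/
def aOpIJ (u : ℤ → ℤ → ℝ) (i j : ℤ) : ℝ :=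
  (u i j + u (i + 1) j + u i (j + 1) + u (i + 1) (j + 1)) / 4

/-- The chord `Δᵢʲf = f(θⱼ) − f(θᵢ)`. -/
def chord {n : ℕ} (f : ℝ → EuclideanSpace ℝ (Fin n)) (θ : ℤ → ℝ) (i j : ℤ) :
    EuclideanSpace ℝ (Fin n) := f (θ j) - f (θ i)

/-- The edge `Δᵢf = f(θᵢ₊₁) − f(θᵢ)`. -/
def edge {n : ℕ} (f : ℝ → EuclideanSpace ℝ (Fin n)) (θ : ℤ → ℝ) (i : ℤ) :
    EuclideanSpace ℝ (Fin n) := f (θ (i + 1)) - f (θ i)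

/-- The unit edge vector `Δᵢf/‖Δᵢf‖`. -/
def uedge {n : ℕ} (f : ℝ → EuclideanSpace ℝ (Fin n)) (θ : ℤ → ℝ) (i : ℤ) :
    EuclideanSpace ℝ (Fin n) := ‖edge f θ i‖⁻¹ • edge f θ i

/-- Chord length `‖Δᵢʲf‖` as a doubly indexed quantity. -/
def chn {n : ℕ} (f : ℝ → EuclideanSpace ℝ (Fin n)) (θ : ℤ → ℝ) (i j : ℤ) : ℝ :=
  ‖chord f θ i j‖


private lemma circleDist_of_Ico {x y : ℝ} (h0 : 0 ≤ x - y) (h1 : x - y < 1) :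
    circleDist x y = min (x - y) (1 - (x - y)) := by
  unfold circleDist
  rw [Int.fract_eq_self.mpr ⟨h0, h1⟩]

private lemma chn_symm {n : ℕ} (f : ℝ → EuclideanSpace ℝ (Fin n)) (θ : ℤ → ℝ) (a b : ℤ) :
    chn f θ a b = chn f θ b a := by
  simp [chn, chord, norm_sub_rev]

private lemma tele_aux (θ : ℤ → ℝ) (β : ℝ) (hgap : ∀ l : ℤ, β ≤ θ (l + 1) - θ l)
    (a : ℤ) : ∀ b : ℤ, a ≤ b → ((b - a : ℤ) : ℝ) * β ≤ θ b - θ a := by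
  refine Int.le_induction ?_ ?_
  · simp
  · intro b hb ih
    have h := hgap b
    have hcast : ((b + 1 - a : ℤ) : ℝ) = ((b - a : ℤ) : ℝ) + 1 := by push_cast; ring
    rw [hcast]
    have hexp : (((b - a : ℤ) : ℝ) + 1) * β = ((b - a : ℤ) : ℝ) * β + β := by ring
    rw [hexp]
    linarith

private lemma chord_lb {n : ℕ} (f : ℝ → EuclideanSpace ℝ (Fin n)) (θ : ℤ → ℝ)
    (L₁ β : ℝ) (hL₁ : 0 ≤ L₁) (hβ : 0 ≤ β) (m : ℕ) (hm : 2 ≤ m)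
    (hmono : StrictMono θ) (hper : ∀ i : ℤ, θ (i + m) = θ i + 1)
    (hgap : ∀ l : ℤ, β ≤ θ (l + 1) - θ l)
    (hlb : ∀ a b : ℝ, L₁ * circleDist a b ≤ ‖f a - f b‖)
    (a b : ℤ) (hab : a ≤ b) (hbm : b ≤ a + m) :
    L₁ * (β * min ((b - a : ℤ) : ℝ) ((m : ℝ) - ((b - a : ℤ) : ℝ))) ≤ chn f θ a b := by
  have hchn : chn f θ a b = ‖f (θ b) - f (θ a)‖ := rfl
  have hm0 : (0:ℝ) ≤ (m:ℝ) := by positivity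
  rcases eq_or_lt_of_le hab with rfl | hab'
  · have h0 : ((a - a : ℤ) : ℝ) = 0 := by push_cast; ring
    rw [hchn, h0, sub_zero, min_eq_left hm0, mul_zero, mul_zero]
    exact norm_nonneg _
  rcases eq_or_lt_of_le hbm with rfl | hbm'
  · have h0 : ((a + (m:ℤ) - a : ℤ) : ℝ) = (m:ℝ) := by push_cast; ring
    rw [hchn, h0]
    have : min (m:ℝ) ((m:ℝ) - (m:ℝ)) = 0 := by simp [min_eq_right hm0]
    rw [this, mul_zero, mul_zero]
    exact norm_nonneg _
  · have hD0 : 0 < θ b - θ a := sub_pos.mpr (hmono hab')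
    have hD1 : θ b - θ a < 1 := by
      have h2 : θ b < θ (a + m) := hmono hbm'
      rw [hper a] at h2; linarith
    have hlow := hlb (θ b) (θ a)
    rw [circleDist_of_Ico hD0.le hD1] at hlow
    have h1 := tele_aux θ β hgap a b hab
    have h2 := tele_aux θ β hgap b (a + m) (le_of_lt hbm')
    rw [hper a] at h2
    have hc : ((a + (m:ℤ) - b : ℤ) : ℝ) = (m : ℝ) - ((b - a : ℤ) : ℝ) := by push_cast; ring
    rw [hc] at h2
    rw [hchn]
    refine le_trans ?_ hlow
    refine mul_le_mul_of_nonneg_left ?_ hL₁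
    refine le_min ?_ ?_
    · have := mul_le_mul_of_nonneg_left (min_le_left ((b - a : ℤ) : ℝ) ((m:ℝ) - ((b - a : ℤ):ℝ))) hβ
      nlinarith [h1]
    · have := mul_le_mul_of_nonneg_left (min_le_right ((b - a : ℤ) : ℝ) ((m:ℝ) - ((b - a : ℤ):ℝ))) hβ
      nlinarith [h2]

private lemma quad_lb (x y p q r B K e : ℝ)
    (hB : 0 ≤ B) (hK : 1 ≤ K)
    (hx : B * K ≤ x) (hy : B * K ≤ y)
    (htri : q ≤ p) (hq0 : 0 ≤ q) (hr0 : 0 ≤ r) (hre : r ≤ 2 * e)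
    (hpar : q * q + r * r = 2 * (x * x + y * y))
    (hNe : 4 * e ^ 2 ≤ (4 * K - 1) * B ^ 2) :
    B * (4 * K - 1) ≤ x + y + p := by
  rcases le_or_gt (B * (4 * K - 1)) (x + y) with hc | hc
  · have hp0 : 0 ≤ p := le_trans hq0 htri
    linarith
  · set t := B * (4 * K - 1) - (x + y) with htd
    have ht0 : 0 < t := by rw [htd]; linarith
    have hst1 : B ≤ (x + y) - t := by rw [htd]; linarith
    have hst2 : (x + y) + t = B * (4 * K - 1) := by rw [htd]; ring
    have hq2 : t ^ 2 ≤ q ^ 2 := by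
      have hr2 : r ^ 2 ≤ 4 * e ^ 2 := by nlinarith
      have h5 : B * ((x + y) + t) ≤ ((x + y) - t) * ((x + y) + t) := by
        refine mul_le_mul_of_nonneg_right hst1 ?_
        rw [hst2]
        have : (0:ℝ) ≤ 4 * K - 1 := by linarith
        exact mul_nonneg hB this
      have h6 : B * ((x + y) + t) = (4 * K - 1) * B ^ 2 := by rw [hst2]; ring
      have h7 : ((x + y) - t) * ((x + y) + t) = (x + y) ^ 2 - t ^ 2 := by ring
      have hA : (4 * K - 1) * B ^ 2 ≤ (x + y) ^ 2 - t ^ 2 := by rw [← h7, ← h6]; exact h5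
      have hqq : q ^ 2 = 2 * x ^ 2 + 2 * y ^ 2 - r ^ 2 := by
        rw [pow_two, pow_two, pow_two, pow_two]; linarith
      nlinarith [sq_nonneg (x - y)]
    have hqt : t ≤ q := by nlinarith
    linarith

set_option maxHeartbeats 2000000 in
/-- Lower bounds for averaged chord lengths of equilateral inscribed polygons of
a bi-Lipschitz closed curve (Lemma 3 of the paper). -/
theorem averaged_chord_lower_bounds (n : ℕ)
    (f : ℝ → EuclideanSpace ℝ (Fin n))
    (hf_per : ∀ x : ℝ, f (x + 1) = f x)
    (L₁ L₂ : ℝ) (hL₁ : 0 < L₁) (hL₁₂ : L₁ ≤ L₂)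
    (hbl : ∀ a b : ℝ,
      L₁ * circleDist a b ≤ ‖f a - f b‖ ∧ ‖f a - f b‖ ≤ L₂ * circleDist a b)
    (θ : ℕ → ℤ → ℝ)
    (hmono : ∀ m : ℕ, 1 ≤ m → StrictMono (θ m))
    (hθper : ∀ m : ℕ, 1 ≤ m → ∀ i : ℤ, θ m (i + m) = θ m i + 1)
    (hθ0 : ∀ m : ℕ, 1 ≤ m → 0 ≤ θ m 1)
    (hθ1 : ∀ m : ℕ, 1 ≤ m → θ m (m : ℤ) < 1)
    (Lm : ℕ → ℝ)
    (hLm : ∀ m : ℕ, Lm m = ∑ i ∈ Finset.Icc (1 : ℤ) (m : ℤ), ‖edge f (θ m) i‖)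
    (heq : ∀ m : ℕ, 1 ≤ m → ∀ i : ℤ, ‖edge f (θ m) i‖ = Lm m / m)
 :
    ∃ m₀ : ℕ, ∀ m : ℕ, m₀ ≤ m → ∀ i j : ℤ,
      1 ≤ |i - j| → |i - j| ≤ ((m / 2 : ℕ) : ℤ) →
      aOpI (chn f (θ m)) i j ≥ (Lm m * L₁ / L₂) * (|(i : ℝ) - (j : ℝ)| - 1 / 2) / m ∧
      aOpI (chn f (θ m)) i (j + 1) ≥ (Lm m * L₁ / L₂) * (|(i : ℝ) - (j : ℝ)| - 1 / 2) / m ∧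
      aOpIJ (chn f (θ m)) i j ≥ (Lm m * L₁ / L₂) * (|(i : ℝ) - (j : ℝ)| - 1 / 4) / m ∧
      aOpIJ (chn f (θ m)) i (j + 1) ≥
        (Lm m * L₁ / (2 * L₂)) * |(i : ℝ) - (j : ℝ)| / m := by
  obtain ⟨N, hN⟩ := exists_nat_ge (4 * L₂ ^ 2 / L₁ ^ 2)
  refine ⟨N + 6, fun m hm i j hk1 hk2 => ?_⟩
  have hm1 : 1 ≤ m := by omega
  have hm6 : 6 ≤ m := by omega
  have hL₂ : (0:ℝ) < L₂ := lt_of_lt_of_le hL₁ hL₁₂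
  have hmpos : (0:ℝ) < (m:ℝ) := by
    have : 0 < m := by omega
    exact_mod_cast this
  have hmono' := hmono m hm1
  have hper' := hθper m hm1
  have hedge : ∀ l : ℤ, ‖f (θ m (l + 1)) - f (θ m l)‖ = Lm m / m := by
    intro l; have h := heq m hm1 l; simpa [edge] using h
  set β : ℝ := Lm m / ((m:ℝ) * L₂) with hβdef
  have hLm0 : (0:ℝ) ≤ Lm m := by
    have h := hedge 0
    have h2 : (0:ℝ) ≤ Lm m / m := h ▸ norm_nonneg _
    have h3 := (le_div_iff₀ hmpos).mp h2
    linarith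
  have hβ0 : (0:ℝ) ≤ β := by
    rw [hβdef]; exact div_nonneg hLm0 (by positivity)
  have hgap : ∀ l : ℤ, β ≤ θ m (l + 1) - θ m l := by
    intro l
    have h01 : 0 < θ m (l + 1) - θ m l := sub_pos.mpr (hmono' (by omega))
    have h1 : θ m (l + 1) - θ m l < 1 := by
      have h2 : θ m (l + 1) < θ m (l + (m:ℤ)) := hmono' (by omega)
      rw [hper' l] at h2; linarith
    have hub := (hbl (θ m (l + 1)) (θ m l)).2
    rw [circleDist_of_Ico h01.le h1, hedge l] at hub
    have hmin := min_le_left (θ m (l + 1) - θ m l) (1 - (θ m (l + 1) - θ m l))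
    have h3 : Lm m / m ≤ L₂ * (θ m (l + 1) - θ m l) := le_trans hub (by nlinarith)
    rw [div_le_iff₀ hmpos] at h3
    rw [hβdef, div_le_iff₀ (by positivity)]
    nlinarith
  -- chord lower bound helper
  have cb2 : ∀ a b c : ℤ, 0 ≤ c →
      ((c ≤ b - a ∧ b - a ≤ (m:ℤ) - c) ∨ (c ≤ a - b ∧ a - b ≤ (m:ℤ) - c)) →
      L₁ * β * (c : ℝ) ≤ chn f (θ m) a b := by
    intro a b c hc hor
    have key : ∀ a' b' : ℤ, a' ≤ b' → b' ≤ a' + m → c ≤ b' - a' → c ≤ (m:ℤ) - (b' - a') →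
        L₁ * β * (c : ℝ) ≤ chn f (θ m) a' b' := by
      intro a' b' h1 h2 h3 h4
      have h5 := chord_lb f (θ m) L₁ β hL₁.le hβ0 m (by omega) hmono' hper' hgap
        (fun x y => (hbl x y).1) a' b' h1 h2
      refine le_trans ?_ h5
      rw [mul_assoc]
      refine mul_le_mul_of_nonneg_left ?_ hL₁.le
      refine mul_le_mul_of_nonneg_left ?_ hβ0
      refine le_min ?_ ?_
      · exact_mod_cast h3
      · have h6 : (c:ℝ) ≤ ((m:ℤ):ℝ) - ((b' - a' : ℤ):ℝ) := by exact_mod_cast (by omega : (c:ℤ) ≤ (m:ℤ) - (b' - a'))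
        exact_mod_cast h6
    rcases hor with ⟨h3, h4⟩ | ⟨h3, h4⟩
    · exact key a b (by omega) (by omega) h3 (by omega)
    · rw [chn_symm]
      exact key b a (by omega) (by omega) h3 (by omega)
  have hmne : (m:ℝ) ≠ 0 := ne_of_gt hmpos
  have hL₂ne : L₂ ≠ 0 := ne_of_gt hL₂
  have hR : ∀ X : ℝ, Lm m * L₁ / L₂ * X / (m:ℝ) = L₁ * β * X := by
    intro X; rw [hβdef]; field_simp
  have hR2 : ∀ X : ℝ, Lm m * L₁ / (2 * L₂) * X / (m:ℝ) = L₁ * β * X / 2 := by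
    intro X; rw [hβdef]; field_simp
  have hNm : 4 * L₂ ^ 2 ≤ (2 * (m:ℝ) - 1) * L₁ ^ 2 := by
    have h1 : (N:ℝ) ≤ (m:ℝ) := by exact_mod_cast (by omega : N ≤ m)
    have h2 : 4 * L₂ ^ 2 / L₁ ^ 2 ≤ (m:ℝ) := le_trans hN h1
    rw [div_le_iff₀ (by positivity)] at h2
    have h3 : (1:ℝ) ≤ (m:ℝ) := by exact_mod_cast hm1
    nlinarith [sq_nonneg L₁]
  obtain ⟨k, hk1', h2k, hj⟩ : ∃ k : ℤ, 1 ≤ k ∧ 2 * k ≤ (m:ℤ) ∧ (j = i + k ∨ j = i - k) := by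
    rcases abs_cases (i - j) with ⟨he, hs⟩ | ⟨he, hs⟩ <;> rw [he] at hk1 hk2
    · exact ⟨i - j, by omega, by omega, Or.inr (by omega)⟩
    · exact ⟨j - i, by omega, by omega, Or.inl (by omega)⟩
  have hk0 : (0:ℤ) ≤ k := by omega
  have hkr0 : (0:ℝ) ≤ (k:ℝ) := by exact_mod_cast hk0
  have hkr1 : (1:ℝ) ≤ (k:ℝ) := by exact_mod_cast hk1'
  -- the hard antipodal case, via the parallelogram law
  have key3 : ∀ a b : ℤ, b = a + k → (m:ℤ) = 2 * k →
      L₁ * β * (4 * (k:ℝ) - 1) ≤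
        chn f (θ m) a b + chn f (θ m) (a+1) b + chn f (θ m) a (b+1) + chn f (θ m) (a+1) (b+1) := by
    intro a b hb hmk
    subst hb
    have hx := cb2 a (a+k) k hk0 (Or.inl ⟨by omega, by omega⟩)
    have hy := cb2 (a+1) (a+k+1) k hk0 (Or.inl ⟨by omega, by omega⟩)
    have hpq : chord f (θ m) (a+1) (a+k) + chord f (θ m) a (a+k+1)
        = chord f (θ m) a (a+k) + chord f (θ m) (a+1) (a+k+1) := by
      simp only [chord]; abel
    have htri : ‖chord f (θ m) a (a+k) + chord f (θ m) (a+1) (a+k+1)‖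
        ≤ chn f (θ m) (a+1) (a+k) + chn f (θ m) a (a+k+1) := by
      rw [← hpq]; exact norm_add_le _ _
    have hsub : chord f (θ m) a (a+k) - chord f (θ m) (a+1) (a+k+1)
        = edge f (θ m) a - edge f (θ m) (a+k) := by
      simp only [chord, edge]; abel
    have hLmm : Lm m / (m:ℝ) = β * L₂ := by rw [hβdef]; field_simp
    have hen : ‖chord f (θ m) a (a+k) - chord f (θ m) (a+1) (a+k+1)‖ ≤ 2 * (β * L₂) := by
      rw [hsub]
      have h1 : ‖edge f (θ m) a - edge f (θ m) (a+k)‖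
          ≤ ‖edge f (θ m) a‖ + ‖edge f (θ m) (a+k)‖ := norm_sub_le _ _
      rw [heq m hm1 a, heq m hm1 (a+k), hLmm] at h1
      linarith
    have hNe : 4 * (β * L₂) ^ 2 ≤ (4 * (k:ℝ) - 1) * (L₁ * β) ^ 2 := by
      have h10 := mul_le_mul_of_nonneg_right hNm (sq_nonneg β)
      have hmr : ((m:ℕ):ℝ) = 2 * (k:ℝ) := by exact_mod_cast hmk
      rw [hmr] at h10
      nlinarith [h10]
    have hpar : ‖chord f (θ m) a (a+k) + chord f (θ m) (a+1) (a+k+1)‖ *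
          ‖chord f (θ m) a (a+k) + chord f (θ m) (a+1) (a+k+1)‖ +
        ‖chord f (θ m) a (a+k) - chord f (θ m) (a+1) (a+k+1)‖ *
          ‖chord f (θ m) a (a+k) - chord f (θ m) (a+1) (a+k+1)‖ =
        2 * (chn f (θ m) a (a+k) * chn f (θ m) a (a+k) +
          chn f (θ m) (a+1) (a+k+1) * chn f (θ m) (a+1) (a+k+1)) :=
      by have h := parallelogram_law_with_norm ℝ (chord f (θ m) a (a+k)) (chord f (θ m) (a+1) (a+k+1)); simp only [sq] at h; exact h
    have hq0 : (0:ℝ) ≤ ‖chord f (θ m) a (a+k) + chord f (θ m) (a+1) (a+k+1)‖ := norm_nonneg _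
    have hr0 : (0:ℝ) ≤ ‖chord f (θ m) a (a+k) - chord f (θ m) (a+1) (a+k+1)‖ := norm_nonneg _
    have hres := quad_lb (chn f (θ m) a (a+k)) (chn f (θ m) (a+1) (a+k+1))
      (chn f (θ m) (a+1) (a+k) + chn f (θ m) a (a+k+1))
      (‖chord f (θ m) a (a+k) + chord f (θ m) (a+1) (a+k+1)‖)
      (‖chord f (θ m) a (a+k) - chord f (θ m) (a+1) (a+k+1)‖)
      (L₁ * β) (k:ℝ) (β * L₂)
      (mul_nonneg hL₁.le hβ0) hkr1 hx hy htri hq0 hr0 hen hpar hNe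
    linarith [hres]
  rcases hj with hj | hj <;> subst hj
  · -- j = i + k
    have habsr : |(i:ℝ) - ((i + k : ℤ):ℝ)| = (k:ℝ) := by
      have h : (i:ℝ) - ((i + k : ℤ):ℝ) = -(k:ℝ) := by push_cast; ring
      rw [h, abs_neg, abs_of_nonneg hkr0]
    refine ⟨?_, ?_, ?_, ?_⟩
    · have b1 := cb2 i (i+k) k hk0 (Or.inl ⟨by omega, by omega⟩)
      have b2 := cb2 (i+1) (i+k) (k-1) (by omega) (Or.inl ⟨by omega, by omega⟩)
      rw [ge_iff_le, habsr, hR ((k:ℝ) - 1/2)]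
      simp only [aOpI]
      push_cast at b1 b2 ⊢
      linarith
    · have b1 := cb2 i (i+k+1) (k-1) (by omega) (Or.inl ⟨by omega, by omega⟩)
      have b2 := cb2 (i+1) (i+k+1) k hk0 (Or.inl ⟨by omega, by omega⟩)
      rw [ge_iff_le, habsr, hR ((k:ℝ) - 1/2)]
      simp only [aOpI]
      push_cast at b1 b2 ⊢
      linarith
    · rw [ge_iff_le, habsr, hR ((k:ℝ) - 1/4)]
      simp only [aOpIJ]
      by_cases hm2k : (m:ℤ) = 2 * k
      · have hkey := key3 i (i+k) rfl hm2k
        linarith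
      · have b1 := cb2 i (i+k) k hk0 (Or.inl ⟨by omega, by omega⟩)
        have b2 := cb2 (i+1) (i+k) (k-1) (by omega) (Or.inl ⟨by omega, by omega⟩)
        have b3 := cb2 i (i+k+1) k hk0 (Or.inl ⟨by omega, by omega⟩)
        have b4 := cb2 (i+1) (i+k+1) k hk0 (Or.inl ⟨by omega, by omega⟩)
        push_cast at b1 b2 b3 b4 ⊢
        linarith
    · rw [ge_iff_le, habsr, hR2 (k:ℝ)]
      simp only [aOpIJ]
      by_cases hm2k : (m:ℤ) = 2 * k
      · have hk3 : (3:ℤ) ≤ k := by omega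
        have b1 := cb2 i (i+k+1) (k-1) (by omega) (Or.inl ⟨by omega, by omega⟩)
        have b2 := cb2 (i+1) (i+k+1) k hk0 (Or.inl ⟨by omega, by omega⟩)
        have b3 := cb2 i (i+k+1+1) (k-2) (by omega) (Or.inl ⟨by omega, by omega⟩)
        have b4 := cb2 (i+1) (i+k+1+1) (k-1) (by omega) (Or.inl ⟨by omega, by omega⟩)
        have hk3r : (3:ℝ) ≤ (k:ℝ) := by exact_mod_cast hk3
        have hB0 : (0:ℝ) ≤ L₁ * β := mul_nonneg hL₁.le hβ0
        have hkB : (0:ℝ) ≤ L₁ * β * ((k:ℝ) - 2) := mul_nonneg hB0 (by linarith)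
        push_cast at b1 b2 b3 b4 ⊢
        linarith
      · have b1 := cb2 i (i+k+1) k hk0 (Or.inl ⟨by omega, by omega⟩)
        have b2 := cb2 (i+1) (i+k+1) k hk0 (Or.inl ⟨by omega, by omega⟩)
        have b3 := cb2 i (i+k+1+1) (k-1) (by omega) (Or.inl ⟨by omega, by omega⟩)
        have b4 := cb2 (i+1) (i+k+1+1) k hk0 (Or.inl ⟨by omega, by omega⟩)
        have hB0 : (0:ℝ) ≤ L₁ * β := mul_nonneg hL₁.le hβ0
        have hkB : (0:ℝ) ≤ L₁ * β * (2 * (k:ℝ) - 1) := mul_nonneg hB0 (by linarith)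
        push_cast at b1 b2 b3 b4 ⊢
        linarith
  · -- j = i - k
    have habsr : |(i:ℝ) - ((i - k : ℤ):ℝ)| = (k:ℝ) := by
      have h : (i:ℝ) - ((i - k : ℤ):ℝ) = (k:ℝ) := by push_cast; ring
      rw [h, abs_of_nonneg hkr0]
    refine ⟨?_, ?_, ?_, ?_⟩
    · have b1 := cb2 i (i-k) k hk0 (Or.inr ⟨by omega, by omega⟩)
      have b2 := cb2 (i+1) (i-k) (k-1) (by omega) (Or.inr ⟨by omega, by omega⟩)
      rw [ge_iff_le, habsr, hR ((k:ℝ) - 1/2)]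
      simp only [aOpI]
      push_cast at b1 b2 ⊢
      linarith
    · have b1 := cb2 i (i-k+1) (k-1) (by omega) (Or.inr ⟨by omega, by omega⟩)
      have b2 := cb2 (i+1) (i-k+1) k hk0 (Or.inr ⟨by omega, by omega⟩)
      rw [ge_iff_le, habsr, hR ((k:ℝ) - 1/2)]
      simp only [aOpI]
      push_cast at b1 b2 ⊢
      linarith
    · rw [ge_iff_le, habsr, hR ((k:ℝ) - 1/4)]
      simp only [aOpIJ]
      by_cases hm2k : (m:ℤ) = 2 * k
      · have hkey := key3 (i-k) i (by omega) hm2k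
        have s1 : chn f (θ m) i (i-k) = chn f (θ m) (i-k) i := chn_symm f (θ m) i (i-k)
        have s2 : chn f (θ m) (i+1) (i-k) = chn f (θ m) (i-k) (i+1) := chn_symm f (θ m) (i+1) (i-k)
        have s3 : chn f (θ m) i (i-k+1) = chn f (θ m) (i-k+1) i := chn_symm f (θ m) i (i-k+1)
        have s4 : chn f (θ m) (i+1) (i-k+1) = chn f (θ m) (i-k+1) (i+1) := chn_symm f (θ m) (i+1) (i-k+1)
        rw [s1, s2, s3, s4]
        linarith
      · have b1 := cb2 i (i-k) k hk0 (Or.inr ⟨by omega, by omega⟩)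
        have b2 := cb2 (i+1) (i-k) k hk0 (Or.inr ⟨by omega, by omega⟩)
        have b3 := cb2 i (i-k+1) (k-1) (by omega) (Or.inr ⟨by omega, by omega⟩)
        have b4 := cb2 (i+1) (i-k+1) k hk0 (Or.inr ⟨by omega, by omega⟩)
        push_cast at b1 b2 b3 b4 ⊢
        linarith
    · rw [ge_iff_le, habsr, hR2 (k:ℝ)]
      simp only [aOpIJ]
      rcases eq_or_lt_of_le hk1' with hk1e | hk2'
      · -- k = 1
        have hkeq : k = 1 := hk1e.symm
        subst hkeq
        have nb1 : (0:ℝ) ≤ chn f (θ m) i (i-1+1) := norm_nonneg _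
        have nb4 : (0:ℝ) ≤ chn f (θ m) (i+1) (i-1+1+1) := norm_nonneg _
        have b2 := cb2 (i+1) (i-1+1) 1 (by omega) (Or.inr ⟨by omega, by omega⟩)
        have b3 := cb2 i (i-1+1+1) 1 (by omega) (Or.inl ⟨by omega, by omega⟩)
        push_cast at b2 b3 ⊢
        linarith
      · -- k ≥ 2
        have b1 := cb2 i (i-k+1) (k-1) (by omega) (Or.inr ⟨by omega, by omega⟩)
        have b2 := cb2 (i+1) (i-k+1) k hk0 (Or.inr ⟨by omega, by omega⟩)
        have b3 := cb2 i (i-k+1+1) (k-2) (by omega) (Or.inr ⟨by omega, by omega⟩)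
        have b4 := cb2 (i+1) (i-k+1+1) (k-1) (by omega) (Or.inr ⟨by omega, by omega⟩)
        have hk2r : (2:ℝ) ≤ (k:ℝ) := by exact_mod_cast hk2'
        have hB0 : (0:ℝ) ≤ L₁ * β := mul_nonneg hL₁.le hβ0
        have hkB : (0:ℝ) ≤ L₁ * β * ((k:ℝ) - 2) := mul_nonneg hB0 (by linarith)
        push_cast at b1 b2 b3 b4 ⊢
        linarith

end
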